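/- For nonnegative integers p, k and any positive integer m: Σ_{j=0}^{p} C(p,j) m^{p−j} S(j,k) = Σ_{t=0}^{m−1} (−1)^t s(m, m−t) S(p+m−t, k+m), where s are the unsigned Stirling numbers of the first kind and S the Stirling numbers of the second kind. -/

import Mathlib

open Finset

/-- Stirling numbers of the second kind. -/
def stirling2 : ℕ → ℕ → ℕ
  | 0, 0 => 1
  | 0, _ + 1 => 0
  | _ + 1, 0 => 0
  | p + 1, k + 1 => stirling2 p k + (k + 1) * stirling2 p (k + 1)

/-- Unsigned Stirling numbers of the first kind. -/
def stirling1 : ℕ → ℕ → ℕ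
  | 0, 0 => 1
  | 0, _ + 1 => 0
  | _ + 1, 0 => 0
  | p + 1, k + 1 => stirling1 p k + p * stirling1 p (k + 1)

/-- Stirling numbers of the second kind with integer second argument (0 when negative). -/
def stirling2Z (p : ℕ) (k : ℤ) : ℤ :=
  if k < 0 then 0 else stirling2 p k.toNat

/-- Generalized Stirling number of the second kind
`S_{a1,b1}^{a2,b2,p2}(p1,k)`. -/
noncomputable def gsn (a1 b1 a2 b2 : ℂ) (p1 p2 k : ℕ) : ℂ :=
  (1 / (k.factorial : ℂ)) * ∑ j ∈ range (k + 1),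
    (-1) ^ j * (k.choose j : ℂ) * (a1 * ((k : ℂ) - j) + b1) ^ p1 *
      (a2 * ((k : ℂ) - j) + b2) ^ p2

/-- Generalized Stirling number with integer index (0 when negative). -/
noncomputable def gsnZ (a1 b1 a2 b2 : ℂ) (p1 p2 : ℕ) (k : ℤ) : ℂ :=
  if k < 0 then 0 else gsn a1 b1 a2 b2 p1 p2 k.toNat


lemma s2_formula (n : ℕ) : ∀ k : ℕ, (k.factorial : ℚ) * stirling2 n k =
    ∑ i ∈ range (k + 1), (-1 : ℚ) ^ i * (k.choose i) * ((k : ℚ) - i) ^ n := by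
  induction n with
  | zero =>
    intro k
    have h := Int.alternating_sum_range_choose (n := k)
    have h2 : ∑ i ∈ range (k + 1), (-1 : ℚ) ^ i * (k.choose i) * ((k : ℚ) - i) ^ 0
        = ((if k = 0 then 1 else 0 : ℤ) : ℚ) := by
      rw [← h]; push_cast; simp
    rw [h2]
    cases k with
    | zero => simp [stirling2]
    | succ K => simp [stirling2]
  | succ n ih =>
    intro k
    cases k with
    | zero =>
      simp [stirling2]
    | succ K =>
      -- helper : ((K+1:ℚ)-i) * (K+1).choose i = (K+1) * K.choose i, for i ≤ K+1
      have helper : ∀ i ∈ range (K + 2), ((K + 1 : ℚ) - i) * ((K+1).choose i) = (K + 1) * (K.choose i) := by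
        intro i hi
        rw [Finset.mem_range] at hi
        have hi' : i ≤ K + 1 := Nat.lt_succ_iff.mp hi
        have := Nat.choose_mul_succ_eq K i
        have hc : ((K.choose i : ℚ)) * (K + 1) = ((K+1).choose i : ℚ) * ((K + 1 - i : ℕ) : ℚ) := by
          exact_mod_cast this
        push_cast [Nat.cast_sub hi'] at hc
        linarith [hc]
      set f : ℕ → ℚ := fun i => (-1 : ℚ) ^ i * ((K + 1 : ℚ) - i) ^ n with hf
      have hB : ∑ i ∈ range (K + 2), (-1 : ℚ) ^ i * ((K+1).choose i) * ((K + 1 : ℚ) - i) ^ (n+1)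
          = (K + 1) * ∑ i ∈ range (K + 2), (K.choose i : ℚ) * f i := by
        rw [Finset.mul_sum]
        refine Finset.sum_congr rfl fun i hi => ?_
        have := helper i hi
        simp only [hf]
        rw [pow_succ]
        linear_combination ((-1:ℚ)^i * ((K:ℚ) + 1 - (i:ℚ))^n) * this
      -- B = A(n, K+1) + A(n, K)
      have hsplit : ∑ i ∈ range (K + 2), (K.choose i : ℚ) * f i
          = (∑ i ∈ range (K + 2), ((K+1).choose i : ℚ) * f i)
            + ∑ i ∈ range (K + 1), (-1:ℚ) ^ i * (K.choose i) * ((K : ℚ) - i) ^ n := by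
        rw [Finset.sum_range_succ' (fun i => ((K+1).choose i : ℚ) * f i) (K+1),
            Finset.sum_range_succ' (fun i => (K.choose i : ℚ) * f i) (K+1)]
        simp only [Nat.choose_succ_succ K, Nat.choose_zero_right, Nat.succ_eq_add_one]
        push_cast
        simp only [add_mul]
        rw [Finset.sum_add_distrib]
        have hneg : ∑ i ∈ range (K + 1), (K.choose i : ℚ) * f (i + 1)
            = - ∑ i ∈ range (K + 1), (-1:ℚ) ^ i * (K.choose i) * ((K : ℚ) - i) ^ n := by
          rw [← Finset.sum_neg_distrib]
          refine Finset.sum_congr rfl fun i _ => ?_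
          simp only [hf, pow_succ]
          have : (K + 1 : ℚ) - (i + 1 : ℕ) = (K : ℚ) - i := by push_cast; ring
          rw [this]; ring
        rw [hneg]; ring
      have hA2 : ∑ i ∈ range (K + 2), ((K+1).choose i : ℚ) * f i
          = ∑ i ∈ range (K + 2), (-1:ℚ) ^ i * ((K+1).choose i) * ((K + 1 : ℚ) - i) ^ n := by
        refine Finset.sum_congr rfl fun i _ => ?_
        simp only [hf]; ring
      have lhs : ((K+1).factorial : ℚ) * stirling2 (n+1) (K+1)
          = (K + 1) * (((K).factorial : ℚ) * stirling2 n K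
              + ((K+1).factorial : ℚ) * stirling2 n (K+1)) := by
        rw [stirling2]
        push_cast [Nat.factorial_succ]
        ring
      rw [lhs, ih K, ih (K+1)]
      push_cast
      rw [hB, hsplit, hA2]
      ring

lemma stirling1_zero_of_lt : ∀ {m j : ℕ}, m < j → stirling1 m j = 0
  | 0, _ + 1, _ => rfl
  | m + 1, j + 1, h => by
    have h' : m < j := Nat.lt_of_succ_lt_succ h
    rw [stirling1, stirling1_zero_of_lt h', stirling1_zero_of_lt (h'.trans (Nat.lt_succ_self j)), mul_zero, add_zero]

lemma mul_stirling1_zero (m : ℕ) : (m : ℚ) * stirling1 m 0 = 0 := by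
  cases m with
  | zero => simp
  | succ n => simp [stirling1]

lemma s1_poly (m : ℕ) (x : ℚ) :
    ∑ j ∈ range (m + 1), (stirling1 m j : ℚ) * x ^ j = ∏ r ∈ range m, (x + r) := by
  induction m with
  | zero => simp [stirling1]
  | succ m ih =>
    rw [Finset.sum_range_succ']
    have h0 : (stirling1 (m+1) 0 : ℚ) * x ^ 0 = 0 := by simp [stirling1]
    rw [h0, add_zero]
    have step : ∀ j, (stirling1 (m+1) (j+1) : ℚ) = stirling1 m j + m * stirling1 m (j+1) := by
      intro j; rw [stirling1]; push_cast; ring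
    calc ∑ j ∈ range (m+1), (stirling1 (m+1) (j+1) : ℚ) * x ^ (j+1)
        = ∑ j ∈ range (m+1), ((stirling1 m j : ℚ) * x ^ (j+1)
            + (m : ℚ) * ((stirling1 m (j+1) : ℚ) * x ^ (j+1))) := by
          refine Finset.sum_congr rfl fun j _ => ?_
          rw [step j]; ring
      _ = x * (∑ j ∈ range (m+1), (stirling1 m j : ℚ) * x ^ j)
            + (m : ℚ) * ∑ j ∈ range (m+1), (stirling1 m (j+1) : ℚ) * x ^ (j+1) := by
          rw [Finset.sum_add_distrib, Finset.mul_sum, Finset.mul_sum]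
          congr 1
          refine Finset.sum_congr rfl fun j _ => ?_
          ring
      _ = x * (∑ j ∈ range (m+1), (stirling1 m j : ℚ) * x ^ j)
            + (m : ℚ) * ((∑ j ∈ range (m+1), (stirling1 m j : ℚ) * x ^ j) - stirling1 m 0) := by
          congr 2
          have := Finset.sum_range_succ' (fun j => (stirling1 m j : ℚ) * x ^ j) (m+1)
          rw [Finset.sum_range_succ _ (m+1), stirling1_zero_of_lt (Nat.lt_succ_self m)] at this
          simp only [Nat.cast_zero, zero_mul, add_zero, pow_zero, mul_one] at this
          linarith [this]
      _ = ∏ r ∈ range (m+1), (x + r) := by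
          rw [ih, Finset.prod_range_succ, mul_sub, mul_stirling1_zero, sub_zero]
          ring

lemma s1_desc (m : ℕ) (hm : 0 < m) (x : ℚ) :
    ∑ t ∈ range m, (-1 : ℚ) ^ t * (stirling1 m (m - t) : ℚ) * x ^ (m - t)
      = ∏ r ∈ range m, (x - r) := by
  have hm0 : stirling1 m 0 = 0 := by
    obtain ⟨n, rfl⟩ : ∃ n, m = n + 1 := ⟨m - 1, (Nat.succ_pred_eq_of_pos hm).symm⟩
    rfl
  have hext : ∑ t ∈ range m, (-1 : ℚ) ^ t * (stirling1 m (m - t) : ℚ) * x ^ (m - t)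
      = ∑ t ∈ range (m + 1), (-1 : ℚ) ^ t * (stirling1 m (m - t) : ℚ) * x ^ (m - t) := by
    rw [Finset.sum_range_succ, Nat.sub_self, hm0]
    simp
  rw [hext, ← Finset.sum_range_reflect]
  have h3 : ∀ j : ℕ, ((-1 : ℚ) ^ j) * ((-1 : ℚ) ^ j) = 1 := by
    intro j; rw [← pow_add, ← two_mul, pow_mul]; norm_num
  calc ∑ j ∈ range (m + 1),
        (-1 : ℚ) ^ (m + 1 - 1 - j) * (stirling1 m (m - (m + 1 - 1 - j)) : ℚ) * x ^ (m - (m + 1 - 1 - j))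
      = ∑ j ∈ range (m + 1), (-1 : ℚ) ^ m * ((stirling1 m j : ℚ) * (-x) ^ j) := by
        refine Finset.sum_congr rfl fun j hj => ?_
        have hj' : j ≤ m := Nat.lt_succ_iff.mp (Finset.mem_range.mp hj)
        have he : m + 1 - 1 - j = m - j := by omega
        rw [he, Nat.sub_sub_self hj']
        have h1 : (-1 : ℚ) ^ (m - j) * (-1) ^ j = (-1) ^ m := by
          rw [← pow_add, Nat.sub_add_cancel hj']
        have h4 : (-1 : ℚ) ^ (m - j) = (-1) ^ m * (-1) ^ j := by
          calc (-1 : ℚ) ^ (m - j) = (-1) ^ (m - j) * ((-1) ^ j * (-1) ^ j) := by rw [h3, mul_one]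
            _ = (-1) ^ m * (-1) ^ j := by rw [← mul_assoc, h1]
        rw [h4, neg_pow x j]
        ring
    _ = (-1 : ℚ) ^ m * ∏ r ∈ range m, (-x + r) := by rw [← Finset.mul_sum, s1_poly]
    _ = ∏ r ∈ range m, (x - r) := by
        have hc : ∀ r ∈ range m, (-x + (r : ℚ)) = (-1) * (x - r) := fun r _ => by ring
        rw [Finset.prod_congr rfl hc, Finset.prod_mul_distrib, Finset.prod_const,
          Finset.card_range, ← mul_assoc, h3, one_mul]

lemma prod_desc (n : ℕ) : ∀ M : ℕ, M ≤ n →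
    ∏ r ∈ range M, ((n : ℚ) - r) = (n.descFactorial M : ℚ) := by
  intro M
  induction M with
  | zero => simp
  | succ M ih =>
    intro h
    have h' : M ≤ n := Nat.le_of_succ_le h
    rw [Finset.prod_range_succ, ih h', Nat.descFactorial_succ]
    push_cast [Nat.cast_sub h']
    ring

lemma choose_desc_id (k m i : ℕ) (hi : i ≤ k) :
    (k + m).choose i * (k + m - i).descFactorial m = (k + m).descFactorial m * k.choose i := by
  rw [Nat.descFactorial_eq_factorial_mul_choose, Nat.descFactorial_eq_factorial_mul_choose]
  have key : (k + m).choose i * (k + m - i).choose m = (k + m).choose m * k.choose i := by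
    have h1 := Nat.choose_mul (n := k + m) (k := m + i) (s := i)
      (Nat.le_add_left i m)
    have h2 := Nat.choose_mul (n := k + m) (k := m + i) (s := m)
      (Nat.le_add_right m i)
    have hsym : (m + i).choose i = (m + i).choose m := by
      rw [Nat.choose_symm_add]
    have e1 : m + i - i = m := by omega
    have e2 : k + m - m = k := by omega
    have e3 : m + i - m = i := by omega
    rw [e1] at h1
    rw [e2, e3] at h2
    rw [← h1, hsym, h2]
  calc (k + m).choose i * (m.factorial * (k + m - i).choose m)
      = m.factorial * ((k + m).choose i * (k + m - i).choose m) := by ring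
    _ = m.factorial * ((k + m).choose m * k.choose i) := by rw [key]
    _ = m.factorial * (k + m).choose m * k.choose i := by ring

theorem stmt11 (p k m : ℕ) (hm : 0 < m) :
    (∑ j ∈ range (p + 1), (p.choose j : ℤ) * (m : ℤ) ^ (p - j) * stirling2 j k) =
      ∑ t ∈ range m,
        (-1 : ℤ) ^ t * (stirling1 m (m - t) : ℤ) * (stirling2 (p + m - t) (k + m) : ℤ) := by
  have key : (∑ j ∈ range (p + 1), (p.choose j : ℚ) * (m : ℚ) ^ (p - j) * (stirling2 j k : ℚ)) =
      ∑ t ∈ range m,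
        (-1 : ℚ) ^ t * (stirling1 m (m - t) : ℚ) * (stirling2 (p + m - t) (k + m) : ℚ) := by
    have hfne : (k.factorial : ℚ) * ((k + m).factorial : ℚ) ≠ 0 := by positivity
    apply mul_left_cancel₀ hfne
    have step1 : (k.factorial : ℚ) *
        (∑ j ∈ range (p + 1), (p.choose j : ℚ) * (m : ℚ) ^ (p - j) * (stirling2 j k : ℚ)) =
        ∑ i ∈ range (k + 1), (-1 : ℚ) ^ i * (k.choose i) * (((k : ℚ) - i) + m) ^ p := by
      rw [Finset.mul_sum]
      calc ∑ j ∈ range (p + 1),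
            (k.factorial : ℚ) * ((p.choose j : ℚ) * (m : ℚ) ^ (p - j) * (stirling2 j k : ℚ))
          = ∑ j ∈ range (p + 1), ∑ i ∈ range (k + 1),
              (-1 : ℚ) ^ i * (k.choose i) * (((k : ℚ) - i) ^ j * (m : ℚ) ^ (p - j) * (p.choose j)) := by
            refine Finset.sum_congr rfl fun j _ => ?_
            have h := s2_formula j k
            calc (k.factorial : ℚ) * ((p.choose j : ℚ) * (m : ℚ) ^ (p - j) * (stirling2 j k : ℚ))
                = (p.choose j : ℚ) * (m : ℚ) ^ (p - j) * ((k.factorial : ℚ) * (stirling2 j k : ℚ)) := by ring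
              _ = (p.choose j : ℚ) * (m : ℚ) ^ (p - j) *
                    ∑ i ∈ range (k + 1), (-1 : ℚ) ^ i * (k.choose i) * ((k : ℚ) - i) ^ j := by rw [h]
              _ = _ := by
                  rw [Finset.mul_sum]
                  refine Finset.sum_congr rfl fun i _ => ?_
                  ring
        _ = ∑ i ∈ range (k + 1), (-1 : ℚ) ^ i * (k.choose i) *
              ∑ j ∈ range (p + 1), ((k : ℚ) - i) ^ j * (m : ℚ) ^ (p - j) * (p.choose j) := by
            rw [Finset.sum_comm]
            refine Finset.sum_congr rfl fun i _ => ?_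
            rw [Finset.mul_sum]
        _ = ∑ i ∈ range (k + 1), (-1 : ℚ) ^ i * (k.choose i) * (((k : ℚ) - i) + m) ^ p := by
            refine Finset.sum_congr rfl fun i _ => ?_
            rw [add_pow]
    have step2 : ((k + m).factorial : ℚ) *
        (∑ t ∈ range m,
          (-1 : ℚ) ^ t * (stirling1 m (m - t) : ℚ) * (stirling2 (p + m - t) (k + m) : ℚ)) =
        ((k + m).descFactorial m : ℚ) *
          ∑ i ∈ range (k + 1), (-1 : ℚ) ^ i * (k.choose i) * (((k : ℚ) - i) + m) ^ p := by
      rw [Finset.mul_sum]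
      calc ∑ t ∈ range m, ((k + m).factorial : ℚ) *
            ((-1 : ℚ) ^ t * (stirling1 m (m - t) : ℚ) * (stirling2 (p + m - t) (k + m) : ℚ))
          = ∑ t ∈ range m, ∑ i ∈ range (k + m + 1),
              (-1 : ℚ) ^ i * ((k + m).choose i : ℚ) * (((k + m : ℕ) : ℚ) - i) ^ p *
                ((-1 : ℚ) ^ t * (stirling1 m (m - t) : ℚ) * (((k + m : ℕ) : ℚ) - i) ^ (m - t)) := by
            refine Finset.sum_congr rfl fun t ht => ?_
            have ht' : t < m := Finset.mem_range.mp ht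
            have hexp : p + m - t = p + (m - t) := by omega
            have h2 := s2_formula (p + m - t) (k + m)
            calc ((k + m).factorial : ℚ) *
                  ((-1 : ℚ) ^ t * (stirling1 m (m - t) : ℚ) * (stirling2 (p + m - t) (k + m) : ℚ))
                = (-1 : ℚ) ^ t * (stirling1 m (m - t) : ℚ) *
                    (((k + m).factorial : ℚ) * (stirling2 (p + m - t) (k + m) : ℚ)) := by ring
              _ = (-1 : ℚ) ^ t * (stirling1 m (m - t) : ℚ) *
                    ∑ i ∈ range (k + m + 1),
                      (-1 : ℚ) ^ i * ((k + m).choose i : ℚ) * (((k + m : ℕ) : ℚ) - i) ^ (p + m - t) := by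
                  rw [h2]
              _ = _ := by
                  rw [Finset.mul_sum]
                  refine Finset.sum_congr rfl fun i _ => ?_
                  rw [hexp, pow_add]
                  ring
        _ = ∑ i ∈ range (k + m + 1),
              (-1 : ℚ) ^ i * ((k + m).choose i : ℚ) * (((k + m : ℕ) : ℚ) - i) ^ p *
                ∑ t ∈ range m,
                  (-1 : ℚ) ^ t * (stirling1 m (m - t) : ℚ) * (((k + m : ℕ) : ℚ) - i) ^ (m - t) := by
            rw [Finset.sum_comm]
            refine Finset.sum_congr rfl fun i _ => ?_
            rw [Finset.mul_sum]
        _ = ∑ i ∈ range (k + m + 1),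
              (-1 : ℚ) ^ i * ((k + m).choose i : ℚ) * (((k + m : ℕ) : ℚ) - i) ^ p *
                ∏ r ∈ range m, ((((k + m : ℕ) : ℚ) - i) - r) := by
            refine Finset.sum_congr rfl fun i _ => ?_
            rw [s1_desc m hm]
        _ = ∑ i ∈ range (k + 1),
              (-1 : ℚ) ^ i * ((k + m).choose i : ℚ) * (((k + m : ℕ) : ℚ) - i) ^ p *
                ∏ r ∈ range m, ((((k + m : ℕ) : ℚ) - i) - r) := by
            symm
            apply Finset.sum_subset (Finset.range_subset_range.mpr (by omega))
            intro i hi hni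
            have him : i < k + m + 1 := Finset.mem_range.mp hi
            have hik : k + 1 ≤ i := le_of_not_gt fun h => hni (Finset.mem_range.mpr h)
            have hz : ∏ r ∈ range m, ((((k + m : ℕ) : ℚ) - i) - r) = 0 := by
              apply Finset.prod_eq_zero (Finset.mem_range.mpr (show k + m - i < m by omega))
              push_cast [Nat.cast_sub (show i ≤ k + m by omega)]
              ring
            rw [hz, mul_zero]
        _ = ∑ i ∈ range (k + 1), ((k + m).descFactorial m : ℚ) *
              ((-1 : ℚ) ^ i * (k.choose i) * (((k : ℚ) - i) + m) ^ p) := by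
            refine Finset.sum_congr rfl fun i hi => ?_
            have hik : i ≤ k := Nat.lt_succ_iff.mp (Finset.mem_range.mp hi)
            have hsub : ((k + m : ℕ) : ℚ) - i = ((k + m - i : ℕ) : ℚ) := by
              push_cast [Nat.cast_sub (show i ≤ k + m by omega)]
              ring
            have hprod : ∏ r ∈ range m, ((((k + m : ℕ) : ℚ) - i) - r)
                = ((k + m - i).descFactorial m : ℚ) := by
              rw [hsub]
              exact prod_desc (k + m - i) m (by omega)
            have hcd : ((k + m).choose i : ℚ) * ((k + m - i).descFactorial m : ℚ)
                = ((k + m).descFactorial m : ℚ) * (k.choose i : ℚ) := by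
              exact_mod_cast congrArg (Nat.cast : ℕ → ℚ) (choose_desc_id k m i hik)
            have hx : ((k + m : ℕ) : ℚ) - i = ((k : ℚ) - i) + m := by push_cast; ring
            rw [hprod, hx]
            linear_combination ((-1 : ℚ) ^ i * (((k : ℚ) - i) + m) ^ p) * hcd
        _ = _ := by rw [← Finset.mul_sum]
    have hfac : ((k + m).descFactorial m : ℚ) * (k.factorial : ℚ) = ((k + m).factorial : ℚ) := by
      have hn : (k + m).descFactorial m * k.factorial = (k + m).factorial := by
        rw [Nat.descFactorial_eq_factorial_mul_choose]
        calc m.factorial * (k + m).choose m * k.factorial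
            = (k + m).choose m * m.factorial * (k + m - m).factorial := by
              rw [Nat.add_sub_cancel]; ring
          _ = (k + m).factorial := Nat.choose_mul_factorial_mul_factorial (Nat.le_add_left m k)
      exact_mod_cast congrArg (Nat.cast : ℕ → ℚ) hn
    calc (k.factorial : ℚ) * ((k + m).factorial : ℚ) *
          (∑ j ∈ range (p + 1), (p.choose j : ℚ) * (m : ℚ) ^ (p - j) * (stirling2 j k : ℚ))
        = ((k + m).factorial : ℚ) * ((k.factorial : ℚ) *
            ∑ j ∈ range (p + 1), (p.choose j : ℚ) * (m : ℚ) ^ (p - j) * (stirling2 j k : ℚ)) := by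
          ring
      _ = ((k + m).factorial : ℚ) *
            ∑ i ∈ range (k + 1), (-1 : ℚ) ^ i * (k.choose i) * (((k : ℚ) - i) + m) ^ p := by
          rw [step1]
      _ = (((k + m).descFactorial m : ℚ) * (k.factorial : ℚ)) *
            ∑ i ∈ range (k + 1), (-1 : ℚ) ^ i * (k.choose i) * (((k : ℚ) - i) + m) ^ p := by
          rw [hfac]
      _ = (k.factorial : ℚ) * (((k + m).descFactorial m : ℚ) *
            ∑ i ∈ range (k + 1), (-1 : ℚ) ^ i * (k.choose i) * (((k : ℚ) - i) + m) ^ p) := by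
          ring
      _ = (k.factorial : ℚ) * (((k + m).factorial : ℚ) *
            ∑ t ∈ range m,
              (-1 : ℚ) ^ t * (stirling1 m (m - t) : ℚ) * (stirling2 (p + m - t) (k + m) : ℚ)) := by
          rw [step2]
      _ = _ := by ring
  exact_mod_cast key
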